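/- arXiv:2112.04897 — 2 statements merged into one kernel-verified Lean document; each statement's English description precedes it below -/
import Mathlib

section
/- Let U be an invertible adjointable operator on H with U*U W_j ⊆ W_j for all j and U commuting with C and C', and let Λ_{CC'} = {W_j, Λ_j, v_j} be a (C,C')-controlled K-g-fusion frame for H with bounds A, B. Then {UW_j, Λ_j P_{W_j} U*, v_j}_{j∈J} is a (C,C')-controlled (UKU*)-g-fusion frame for H with bounds A/‖U‖² and B‖U‖². -/
open scoped RightActions

noncomputable section

/-- The `CStarModule` class as it stood in the older Mathlib (right `Aᵐᵒᵖ`-action). -/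
class CStarModuleOld (A E : Type*) [NonUnitalSemiring A] [StarRing A] [Module ℂ A]
    [AddCommGroup E] [Module ℂ E] [PartialOrder A] [SMul Aᵐᵒᵖ E] [Norm A] [Norm E]
    extends Inner A E where
  inner_add_right {x} {y} {z} : inner x (y + z) = inner x y + inner x z
  inner_self_nonneg {x} : 0 ≤ inner x x
  inner_self {x} : inner x x = 0 ↔ x = 0
  inner_op_smul_right {a : A} {x y : E} : inner x (y <• a) = inner x y * a
  inner_smul_right_complex {z : ℂ} {x} {y} : inner x (z • y) = z • inner x y
  star_inner x y : star (inner x y) = inner y x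
  norm_eq_sqrt_norm_inner_self x : ‖x‖ = √‖inner x x‖

variable {A : Type*} [CStarAlgebra A] [PartialOrder A] [StarOrderedRing A]
variable {H : Type*} [NormedAddCommGroup H] [NormedSpace ℂ H] [SMul Aᵐᵒᵖ H] [CStarModuleOld A H]
variable {J : Type*} {Hs : J → Type*} [∀ j, NormedAddCommGroup (Hs j)]
  [∀ j, NormedSpace ℂ (Hs j)] [∀ j, SMul Aᵐᵒᵖ (Hs j)] [∀ j, CStarModuleOld A (Hs j)]

namespace CStarModuleOld

section helpers

variable {A₀ : Type*} [CStarAlgebra A₀] [PartialOrder A₀]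

variable {E : Type*} [NormedAddCommGroup E] [NormedSpace ℂ E] [SMul A₀ᵐᵒᵖ E] [CStarModuleOld A₀ E]

lemma inner_zero_right {x : E} : inner A₀ x (0 : E) = 0 := by
  have h := CStarModuleOld.inner_add_right (A := A₀) (x := x) (y := (0 : E)) (z := 0)
  rw [add_zero] at h
  simpa using h

lemma inner_neg_right {x y : E} : inner A₀ x (-y) = -inner A₀ x y := by
  have h := CStarModuleOld.inner_add_right (A := A₀) (x := x) (y := -y) (z := y)
  rw [neg_add_cancel, inner_zero_right] at h
  exact eq_neg_of_add_eq_zero_left h.symm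

lemma inner_sub_right {x y z : E} : inner A₀ x (y - z) = inner A₀ x y - inner A₀ x z := by
  rw [sub_eq_add_neg, CStarModuleOld.inner_add_right, inner_neg_right, ← sub_eq_add_neg]

lemma inner_sub_left {x y z : E} : inner A₀ (x - y) z = inner A₀ x z - inner A₀ y z := by
  rw [← CStarModuleOld.star_inner (A := A₀) z (x - y), inner_sub_right, star_sub,
    CStarModuleOld.star_inner, CStarModuleOld.star_inner]

lemma inner_zero_left {x : E} : inner A₀ (0 : E) x = 0 := by
  rw [← CStarModuleOld.star_inner (A := A₀) x 0, inner_zero_right, star_zero]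

lemma inner_op_smul_left {a : A₀} {x y : E} : inner A₀ (x <• a) y = star a * inner A₀ x y := by
  rw [← CStarModuleOld.star_inner (A := A₀) y (x <• a), CStarModuleOld.inner_op_smul_right,
    star_mul, CStarModuleOld.star_inner]

lemma inner_smul_right_real {r : ℝ} {x y : E} : inner A₀ x (r • y) = r • inner A₀ x y := by
  have h₁ : r • y = (r : ℂ) • y := by simp
  rw [h₁, CStarModuleOld.inner_smul_right_complex]
  simp

lemma inner_smul_left_real {r : ℝ} {x y : E} : inner A₀ (r • x) y = r • inner A₀ x y := by
  rw [← CStarModuleOld.star_inner (A := A₀) y (r • x), inner_smul_right_real, star_smul,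
    star_trivial, CStarModuleOld.star_inner]

lemma isSelfAdjoint_inner_self {x : E} : IsSelfAdjoint (inner A₀ x x) :=
  CStarModuleOld.star_inner _ _

lemma norm_sq_eq {x : E} : ‖x‖ ^ 2 = ‖inner A₀ x x‖ := by
  rw [CStarModuleOld.norm_eq_sqrt_norm_inner_self (A := A₀) x, Real.sq_sqrt (norm_nonneg _)]

variable [StarOrderedRing A₀]

lemma inner_mul_inner_swap_le' {x y : E} :
    inner A₀ y x * inner A₀ x y ≤ ‖x‖ ^ 2 • inner A₀ y y := by
  rcases eq_or_ne x 0 with h | h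
  · simp [h, inner_zero_left, inner_zero_right]
  · have h₁ : ∀ (a : A₀),
        (0 : A₀) ≤ ‖x‖ ^ 2 • (star a * a) - ‖x‖ ^ 2 • (star a * inner A₀ x y)
                  - ‖x‖ ^ 2 • (inner A₀ y x * a) + ‖x‖ ^ 2 • (‖x‖ ^ 2 • inner A₀ y y) := fun a => by
      calc (0 : A₀) ≤ inner A₀ (x <• a - ‖x‖ ^ 2 • y) (x <• a - ‖x‖ ^ 2 • y) :=
              CStarModuleOld.inner_self_nonneg
        _ = star a * inner A₀ x x * a - ‖x‖ ^ 2 • (star a * inner A₀ x y)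
                  - ‖x‖ ^ 2 • (inner A₀ y x * a) + ‖x‖ ^ 2 • (‖x‖ ^ 2 • inner A₀ y y) := by
              simp only [inner_sub_right, CStarModuleOld.inner_op_smul_right, inner_sub_left,
                inner_op_smul_left, inner_smul_left_real, inner_smul_right_real, smul_sub, sub_mul,
                mul_assoc, smul_mul_assoc, mul_smul_comm]
              abel
        _ ≤ ‖x‖ ^ 2 • (star a * a) - ‖x‖ ^ 2 • (star a * inner A₀ x y)
                  - ‖x‖ ^ 2 • (inner A₀ y x * a) + ‖x‖ ^ 2 • (‖x‖ ^ 2 • inner A₀ y y) := by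
              gcongr
              calc _ ≤ ‖inner A₀ x x‖ • (star a * a) :=
                  CStarAlgebra.star_left_conjugate_le_norm_smul (hb := isSelfAdjoint_inner_self)
                _ = ‖x‖ ^ 2 • (star a * a) := by rw [norm_sq_eq (A₀ := A₀)]
    specialize h₁ (inner A₀ x y)
    simp only [CStarModuleOld.star_inner, sub_self, zero_sub, le_neg_add_iff_add_le,
      add_zero] at h₁
    have hx : 0 < ‖x‖ := norm_pos_iff.mpr h
    rwa [smul_le_smul_iff_of_pos_left (pow_pos hx _)] at h₁

variable (E) in
lemma norm_inner_le {x y : E} : ‖inner A₀ x y‖ ≤ ‖x‖ * ‖y‖ := by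
  have := calc ‖inner A₀ x y‖ ^ 2 = ‖inner A₀ y x * inner A₀ x y‖ := by
                rw [← CStarModuleOld.star_inner (A := A₀) x y, CStarRing.norm_star_mul_self,
                  pow_two]
    _ ≤ ‖‖x‖ ^ 2 • inner A₀ y y‖ := by
                refine CStarAlgebra.norm_le_norm_of_nonneg_of_le ?_ inner_mul_inner_swap_le'
                rw [← CStarModuleOld.star_inner (A := A₀) x y]
                exact star_mul_self_nonneg _
    _ = ‖x‖ ^ 2 * ‖inner A₀ y y‖ := by rw [norm_smul, Real.norm_of_nonneg (by positivity)]
    _ = ‖x‖ ^ 2 * ‖y‖ ^ 2 := by rw [norm_sq_eq (A₀ := A₀) (x := y)]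
    _ = (‖x‖ * ‖y‖) ^ 2 := by ring
  exact (pow_le_pow_iff_left₀ (norm_nonneg _) (by positivity) (by norm_num)).mp this

end helpers

end CStarModuleOld

private lemma cube_eq_zero' {c : A} (hc : 0 ≤ c) (h : c ^ 3 = 0) : c = 0 := by
  have hsa : IsSelfAdjoint c := IsSelfAdjoint.of_nonneg hc
  have h4 : c ^ 4 = 0 := by
    have h' : c ^ 4 = c ^ 3 * c := pow_succ c 3
    rw [h', h, zero_mul]
  have h2 : ‖c ^ 2‖ = ‖c‖ * ‖c‖ := by
    rw [pow_two]; nth_rw 1 [← hsa.star_eq]; exact CStarRing.norm_star_mul_self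
  have hsa2 : IsSelfAdjoint (c ^ 2) := hsa.pow 2
  have h4n : ‖c ^ 4‖ = ‖c ^ 2‖ * ‖c ^ 2‖ := by
    have h' : c ^ 4 = c ^ 2 * c ^ 2 := by rw [← pow_add]
    rw [h']; nth_rw 1 [← hsa2.star_eq]; exact CStarRing.norm_star_mul_self
  have hn : ‖c‖ ^ 4 = 0 := by
    rw [h4, norm_zero, h2] at h4n; nlinarith [norm_nonneg c]
  exact norm_eq_zero.mp (pow_eq_zero_iff (by norm_num) |>.mp hn)

omit [StarOrderedRing A] in
private lemma ext_inner_left' {w w' : H}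
    (h : ∀ g : H, (inner A w g : A) = inner A w' g) : w = w' := by
  have h2 : (inner A (w - w') (w - w') : A) = 0 := by
    rw [CStarModuleOld.inner_sub_left, h, sub_self]
  exact sub_eq_zero.mp (CStarModuleOld.inner_self (A := A) (x := w - w') |>.mp h2)

/-- Key operator inequality: adjointable bounded maps satisfy
`⟪T x, T x⟫ ≤ M ^ 2 • ⟪x, x⟫`. -/
private lemma key_ineq {T T' : H →L[ℂ] H}
    (hT' : ∀ x y : H, (inner A (T x) y : A) = inner A x (T' y))
    (M : ℝ) (hTn : ∀ x : H, ‖T x‖ ≤ M * ‖x‖) (x : H) :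
    (inner A (T x) (T x) : A) ≤ (M ^ 2) • (inner A x x : A) := by
  have hTmod : ∀ (z : H) (a : A), T (z <• a) = (T z) <• a := by
    intro z a
    refine ext_inner_left' (A := A) fun g => ?_
    rw [hT' (z <• a) g, CStarModuleOld.inner_op_smul_left, CStarModuleOld.inner_op_smul_left,
      ← hT' z g]
  have hpsa : IsSelfAdjoint (inner A x x : A) := CStarModuleOld.isSelfAdjoint_inner_self
  have hqsa : IsSelfAdjoint (inner A (T x) (T x) : A) := CStarModuleOld.isSelfAdjoint_inner_self
  have main : ∀ ε : ℝ, 0 < ε →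
      (inner A (T x) (T x) : A) ≤ (M ^ 2 + ε) • (inner A x x : A) := by
    intro ε hε
    have hk0 : (0:ℝ) ≤ M ^ 2 + ε := by positivity
    obtain ⟨d, hd⟩ : ∃ d : A, d = (M ^ 2 + ε) • (inner A x x : A) - inner A (T x) (T x) := ⟨_, rfl⟩
    have hdsa : IsSelfAdjoint d := by
      rw [hd, IsSelfAdjoint, star_sub, star_smul, star_trivial, hpsa.star_eq, hqsa.star_eq]
    obtain ⟨c, hc⟩ : ∃ c : A, c = d⁻ := ⟨_, rfl⟩
    have hc0 : 0 ≤ c := hc ▸ CFC.negPart_nonneg d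
    have hcsa : IsSelfAdjoint c := IsSelfAdjoint.of_nonneg hc0
    have hz1 : (inner A (x <• c) (x <• c) : A) = c * inner A x x * c := by
      rw [CStarModuleOld.inner_op_smul_left, CStarModuleOld.inner_op_smul_right, hcsa.star_eq,
        mul_assoc]
    have hz2 : (inner A (T (x <• c)) (T (x <• c)) : A) = c * inner A (T x) (T x) * c := by
      rw [hTmod x c, CStarModuleOld.inner_op_smul_left, CStarModuleOld.inner_op_smul_right,
        hcsa.star_eq, mul_assoc]
    have h1 : d⁺ - c = d := by rw [hc]; exact CFC.posPart_sub_negPart d hdsa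
    have h2 : c * d⁺ = 0 := by rw [hc]; exact CFC.negPart_mul_posPart d
    have hcdc : c * d * c = -(c ^ 3) := by
      calc c * d * c = c * (d⁺ - c) * c := by rw [h1]
        _ = c * d⁺ * c - c * c * c := by noncomm_ring
        _ = -(c ^ 3) := by rw [h2, zero_mul, zero_sub, pow_succ, pow_two]
    have hqd : (inner A (T x) (T x) : A) = (M ^ 2 + ε) • (inner A x x : A) - d := by
      rw [hd, sub_sub_cancel]
    have hcqc : c * inner A (T x) (T x) * c
        = (M ^ 2 + ε) • (c * inner A x x * c) + c ^ 3 := by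
      calc c * inner A (T x) (T x) * c
          = c * ((M ^ 2 + ε) • (inner A x x : A)) * c - c * d * c := by
            rw [hqd]; noncomm_ring
        _ = (M ^ 2 + ε) • (c * inner A x x * c) + c ^ 3 := by
            rw [hcdc, mul_smul_comm, smul_mul_assoc, sub_neg_eq_add]
    have hcpc0 : 0 ≤ c * inner A x x * c := hz1 ▸ CStarModuleOld.inner_self_nonneg
    have hc30 : 0 ≤ (c ^ 3 : A) := CStarAlgebra.pow_nonneg hc0 3
    have hle : (M ^ 2 + ε) • (c * inner A x x * c) ≤ c * inner A (T x) (T x) * c := by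
      rw [hcqc]; exact le_add_of_nonneg_right hc30
    have hnorm1 : (M ^ 2 + ε) * ‖c * inner A x x * c‖ ≤ ‖c * inner A (T x) (T x) * c‖ := by
      have := CStarAlgebra.norm_le_norm_of_nonneg_of_le (smul_nonneg hk0 hcpc0) hle
      rwa [norm_smul, Real.norm_of_nonneg hk0] at this
    have hnorm2 : ‖c * inner A (T x) (T x) * c‖ = ‖T (x <• c)‖ ^ 2 := by
      rw [← hz2, ← CStarModuleOld.norm_sq_eq]
    have hnorm3 : ‖T (x <• c)‖ ^ 2 ≤ M ^ 2 * ‖x <• c‖ ^ 2 := by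
      calc ‖T (x <• c)‖ ^ 2 ≤ (M * ‖x <• c‖) ^ 2 :=
            pow_le_pow_left₀ (norm_nonneg _) (hTn _) 2
        _ = M ^ 2 * ‖x <• c‖ ^ 2 := by ring
    have hnormz : ‖x <• c‖ ^ 2 = ‖c * inner A x x * c‖ := by
      rw [CStarModuleOld.norm_sq_eq (A₀ := A), hz1]
    have ht0 : ‖c * inner A x x * c‖ = 0 := by
      have hchain : (M ^ 2 + ε) * ‖c * inner A x x * c‖
          ≤ M ^ 2 * ‖c * inner A x x * c‖ := by
        calc (M ^ 2 + ε) * ‖c * inner A x x * c‖ ≤ ‖c * inner A (T x) (T x) * c‖ := hnorm1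
          _ = ‖T (x <• c)‖ ^ 2 := hnorm2
          _ ≤ M ^ 2 * ‖x <• c‖ ^ 2 := hnorm3
          _ = M ^ 2 * ‖c * inner A x x * c‖ := by rw [hnormz]
      nlinarith [norm_nonneg (c * inner A x x * c)]
    have hzz : (x <• c : H) = 0 := by
      have h' : ‖x <• c‖ ^ 2 = 0 := by rw [hnormz, ht0]
      have h'' : ‖x <• c‖ = 0 := by nlinarith [norm_nonneg (x <• c : H)]
      exact norm_eq_zero.mp h''
    have hcpc : c * inner A x x * c = 0 := by
      rw [← hz1, hzz]; exact CStarModuleOld.inner_zero_left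
    have hcqc0 : c * inner A (T x) (T x) * c = 0 := by
      rw [← hz2, hzz, map_zero]; exact CStarModuleOld.inner_zero_left
    have hc3 : (c ^ 3 : A) = 0 := by
      have h' := hcqc
      rw [hcqc0, hcpc, smul_zero, zero_add] at h'
      exact h'.symm
    have hczero : c = 0 := cube_eq_zero' hc0 hc3
    have hd0 : 0 ≤ d := by
      rw [← h1, hczero, sub_zero]
      exact CFC.posPart_nonneg d
    rw [hd, sub_nonneg] at hd0
    exact hd0
  have htend : Filter.Tendsto
      (fun n : ℕ => (M ^ 2 + 1 / (n + 1)) • (inner A x x : A) - inner A (T x) (T x))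
      Filter.atTop (nhds ((M ^ 2) • (inner A x x : A) - inner A (T x) (T x))) := by
    have h1 : Filter.Tendsto (fun n : ℕ => (M ^ 2 + 1 / (n + 1) : ℝ))
        Filter.atTop (nhds (M ^ 2)) := by
      have h2 := tendsto_one_div_add_atTop_nhds_zero_nat.const_add (M ^ 2)
      simpa using h2
    exact (h1.smul_const _).sub_const _
  have hmem : ∀ n : ℕ,
      (M ^ 2 + 1 / (n + 1)) • (inner A x x : A) - inner A (T x) (T x) ∈ {a : A | 0 ≤ a} := by
    intro n
    have hpos : (0:ℝ) < 1 / (n + 1) := by positivity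
    simpa [Set.mem_setOf_eq, sub_nonneg] using main _ hpos
  have hfinal := CStarAlgebra.isClosed_nonneg (A := A) |>.mem_of_tendsto htend
    (Filter.Eventually.of_forall hmem)
  simpa [Set.mem_setOf_eq, sub_nonneg] using hfinal

/-- if `Λ_{CC'}` is a `(C,C')`-controlled `K`-g-fusion frame with bounds
`A, B`, `U` invertible with `U*U W_j ⊆ W_j` and commuting with `C, C'`, then
`{UW_j, Λ_jP_{W_j}U*, v_j}` is a `(C,C')`-controlled `UKU*`-g-fusion frame with
bounds `A/‖U‖²` and `B‖U‖²`. -/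
theorem controlled_K_g_fusion_frame_image
    (C C' : H →L[ℂ] H) (P : J → H →L[ℂ] H) (Λ : ∀ j, H →L[ℂ] Hs j)
    (Λad : ∀ j, Hs j →L[ℂ] H) (v : J → A)
    (hΛad : ∀ (j) (x : H) (u : Hs j), (inner A (Λ j x) u : A) = inner A x (Λad j u))
    (hP_idem : ∀ j, (P j).comp (P j) = P j)
    (hP_sa : ∀ (j) (f g : H), (inner A (P j f) g : A) = inner A f (P j g))
    (hC_sa : ∀ f g : H, (inner A (C f) g : A) = inner A f (C g))
    (hC'_sa : ∀ f g : H, (inner A (C' f) g : A) = inner A f (C' g))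
    (hC_pos : ∀ f : H, 0 ≤ (inner A (C f) f : A))
    (hC'_pos : ∀ f : H, 0 ≤ (inner A (C' f) f : A))
    (hC_inv : Function.Bijective C) (hC'_inv : Function.Bijective C')
    (hCC' : C.comp C' = C'.comp C)
    (hCT : ∀ j, C.comp ((P j).comp ((Λad j).comp ((Λ j).comp (P j))))
      = ((P j).comp ((Λad j).comp ((Λ j).comp (P j)))).comp C)
    (hC'T : ∀ j, C'.comp ((P j).comp ((Λad j).comp ((Λ j).comp (P j))))
      = ((P j).comp ((Λad j).comp ((Λ j).comp (P j)))).comp C')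
    (hv_pos : ∀ j, 0 ≤ v j) (hv_inv : ∀ j, IsUnit (v j))
    (hv_central : ∀ (j) (a : A), Commute (v j) a)
    (K Kad : H →L[ℂ] H)
    (hKad : ∀ x y : H, (inner A (K x) y : A) = inner A x (Kad y))
    (a b : ℝ) (ha : 0 < a) (hb : 0 < b)
    (hsum : ∀ f : H, Summable fun j =>
      v j * v j * (inner A (Λ j (P j (C f))) (Λ j (P j (C' f))) : A))
    (hframe : ∀ f : H,
      a • (inner A (Kad f) (Kad f) : A) ≤
        (∑' j, v j * v j * (inner A (Λ j (P j (C f))) (Λ j (P j (C' f))) : A)) ∧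
      (∑' j, v j * v j * (inner A (Λ j (P j (C f))) (Λ j (P j (C' f))) : A)) ≤
        b • (inner A f f : A))
    (U Uad : H →L[ℂ] H)
    (hUad : ∀ x y : H, (inner A (U x) y : A) = inner A x (Uad y))
    (hU_inv : Function.Bijective U)
    (hUW : ∀ (j) (x : H), x ∈ Set.range (P j) → Uad (U x) ∈ Set.range (P j))
    (hUC : U.comp C = C.comp U) (hUC' : U.comp C' = C'.comp U)
    (Q : J → H →L[ℂ] H)
    (hQ_idem : ∀ j, (Q j).comp (Q j) = Q j)
    (hQ_sa : ∀ (j) (f g : H), (inner A (Q j f) g : A) = inner A f (Q j g))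
    (hQ_range : ∀ j, Set.range (Q j) = U '' Set.range (P j)) :
    ∀ f : H,
      Summable (fun j => v j * v j *
        (inner A (Λ j (P j (Uad (Q j (C f))))) (Λ j (P j (Uad (Q j (C' f))))) : A)) ∧
      (a / ‖U‖ ^ 2) • (inner A (U (Kad (Uad f))) (U (Kad (Uad f))) : A) ≤
        (∑' j, v j * v j *
          (inner A (Λ j (P j (Uad (Q j (C f))))) (Λ j (P j (Uad (Q j (C' f))))) : A)) ∧
      (∑' j, v j * v j *
        (inner A (Λ j (P j (Uad (Q j (C f))))) (Λ j (P j (Uad (Q j (C' f))))) : A)) ≤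
        (b * ‖U‖ ^ 2) • (inner A f f : A) := by
  intro f
  -- adjoint of U, flipped
  have hUad' : ∀ y h : H, (inner A (Uad y) h : A) = inner A y (U h) := by
    intro y h
    have h1 := congrArg star (hUad h y)
    rw [CStarModuleOld.star_inner, CStarModuleOld.star_inner] at h1
    exact h1.symm
  -- Q fixes U (P _)
  have hQUP : ∀ (j) (h : H), Q j (U (P j h)) = U (P j h) := by
    intro j h
    have hmem : U (P j h) ∈ Set.range (Q j) := by
      rw [hQ_range j]; exact ⟨P j h, ⟨h, rfl⟩, rfl⟩
    obtain ⟨w, hw⟩ := hmem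
    have h2 : Q j (Q j w) = Q j w := by
      have h3 := ContinuousLinearMap.ext_iff.mp (hQ_idem j) w
      simpa using h3
    rw [← hw]; exact h2
  have hPUadQ : ∀ (j) (g : H), P j (Uad (Q j g)) = P j (Uad g) := by
    intro j g
    refine ext_inner_left' (A := A) fun h => ?_
    calc (inner A (P j (Uad (Q j g))) h : A)
        = inner A (Uad (Q j g)) (P j h) := hP_sa j _ h
      _ = inner A (Q j g) (U (P j h)) := hUad' _ _
      _ = inner A g (Q j (U (P j h))) := hQ_sa j g _
      _ = inner A g (U (P j h)) := by rw [hQUP j h]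
      _ = inner A (Uad g) (P j h) := (hUad' g (P j h)).symm
      _ = inner A (P j (Uad g)) h := (hP_sa j (Uad g) h).symm
  have hcoC : ∀ h : H, U (C h) = C (U h) := by
    intro h
    have h3 := ContinuousLinearMap.ext_iff.mp hUC h
    simpa using h3
  have hcoC' : ∀ h : H, U (C' h) = C' (U h) := by
    intro h
    have h3 := ContinuousLinearMap.ext_iff.mp hUC' h
    simpa using h3
  have hUadC : ∀ g : H, Uad (C g) = C (Uad g) := by
    intro g
    refine ext_inner_left' (A := A) fun h => ?_
    calc (inner A (Uad (C g)) h : A)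
        = inner A (C g) (U h) := hUad' _ _
      _ = inner A g (C (U h)) := hC_sa g (U h)
      _ = inner A g (U (C h)) := by rw [hcoC h]
      _ = inner A (Uad g) (C h) := (hUad' g (C h)).symm
      _ = inner A (C (Uad g)) h := (hC_sa (Uad g) h).symm
  have hUadC' : ∀ g : H, Uad (C' g) = C' (Uad g) := by
    intro g
    refine ext_inner_left' (A := A) fun h => ?_
    calc (inner A (Uad (C' g)) h : A)
        = inner A (C' g) (U h) := hUad' _ _
      _ = inner A g (C' (U h)) := hC'_sa g (U h)
      _ = inner A g (U (C' h)) := by rw [hcoC' h]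
      _ = inner A (Uad g) (C' h) := (hUad' g (C' h)).symm
      _ = inner A (C' (Uad g)) h := (hC'_sa (Uad g) h).symm
  have hterm : ∀ j, P j (Uad (Q j (C f))) = P j (C (Uad f)) := fun j => by
    rw [hPUadQ j (C f), hUadC f]
  have hterm' : ∀ j, P j (Uad (Q j (C' f))) = P j (C' (Uad f)) := fun j => by
    rw [hPUadQ j (C' f), hUadC' f]
  have hfun : (fun j => v j * v j *
        (inner A (Λ j (P j (Uad (Q j (C f))))) (Λ j (P j (Uad (Q j (C' f))))) : A))
      = fun j => v j * v j *
        (inner A (Λ j (P j (C (Uad f)))) (Λ j (P j (C' (Uad f)))) : A) := by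
    funext j; rw [hterm j, hterm' j]
  have hS1 := (hframe (Uad f)).1
  have hS2 := (hframe (Uad f)).2
  refine ⟨?_, ?_, ?_⟩
  · rw [hfun]; exact hsum (Uad f)
  · rw [hfun]
    by_cases hU0 : ‖U‖ = 0
    · have hUzero : U = 0 := norm_eq_zero.mp hU0
      have hz : U (Kad (Uad f)) = 0 := by rw [hUzero]; rfl
      rw [hz]
      have h0 : (inner A (0:H) (0:H) : A) = 0 := CStarModuleOld.inner_zero_left
      rw [h0, smul_zero]
      exact le_trans (smul_nonneg ha.le CStarModuleOld.inner_self_nonneg) hS1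
    · have hkey := key_ineq (A := A) hUad ‖U‖ (fun x => U.le_opNorm x) (Kad (Uad f))
      calc (a / ‖U‖ ^ 2) • (inner A (U (Kad (Uad f))) (U (Kad (Uad f))) : A)
          ≤ (a / ‖U‖ ^ 2) • ((‖U‖ ^ 2) • (inner A (Kad (Uad f)) (Kad (Uad f)) : A)) :=
            smul_le_smul_of_nonneg_left hkey (by positivity)
        _ = a • (inner A (Kad (Uad f)) (Kad (Uad f)) : A) := by
            rw [smul_smul, div_mul_cancel₀ a (pow_ne_zero 2 hU0)]
        _ ≤ _ := hS1
  · rw [hfun]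
    have hUadn : ∀ y : H, ‖Uad y‖ ≤ ‖U‖ * ‖y‖ := by
      intro y
      rcases eq_or_ne ‖Uad y‖ 0 with h0 | h0
      · rw [h0]; positivity
      · have hpos : 0 < ‖Uad y‖ := lt_of_le_of_ne (norm_nonneg _) (Ne.symm h0)
        have h1 : ‖Uad y‖ ^ 2 = ‖(inner A (Uad y) (Uad y) : A)‖ := CStarModuleOld.norm_sq_eq
        have h2 : (inner A (Uad y) (Uad y) : A) = inner A y (U (Uad y)) := hUad' y (Uad y)
        have h3 : ‖(inner A y (U (Uad y)) : A)‖ ≤ ‖y‖ * ‖U (Uad y)‖ :=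
          CStarModuleOld.norm_inner_le H
        have h4 : ‖U (Uad y)‖ ≤ ‖U‖ * ‖Uad y‖ := U.le_opNorm _
        have h5 : ‖Uad y‖ ^ 2 ≤ ‖y‖ * (‖U‖ * ‖Uad y‖) := by
          rw [h1, h2]
          exact le_trans h3 (mul_le_mul_of_nonneg_left h4 (norm_nonneg y))
        nlinarith [norm_nonneg y]
    have hkey2 := key_ineq (A := A) hUad' ‖U‖ hUadn f
    calc (∑' j, v j * v j *
          (inner A (Λ j (P j (C (Uad f)))) (Λ j (P j (C' (Uad f)))) : A))
        ≤ b • (inner A (Uad f) (Uad f) : A) := hS2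
      _ ≤ b • ((‖U‖ ^ 2) • (inner A f f : A)) :=
          smul_le_smul_of_nonneg_left hkey2 hb.le
      _ = (b * ‖U‖ ^ 2) • (inner A f f : A) := by rw [smul_smul]
end
end

section
/- Let K be an adjointable operator on H. Then Λ_{CC'} = {W_j, Λ_j, v_j} is a (C,C')-controlled K-g-fusion frame for H if and only if there exist constants A, B > 0 such that A‖K*f‖² ≤ ‖Σ_{j∈J} v_j² ⟨Λ_j P_{W_j} C f, Λ_j P_{W_j} C' f⟩‖ ≤ B‖f‖² for all f ∈ H. -/
open scoped RightActions

noncomputable section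

/-- The Hilbert C⋆-module class of the older library (right `A`-action, written as a left
`Aᵐᵒᵖ`-action), restated here since Mathlib's `CStarModule` now uses a left `A`-action. -/
class CStarModuleRight (A : outParam <| Type*) (E : Type*) [NonUnitalSemiring A] [StarRing A]
    [Module ℂ A] [AddCommGroup E] [Module ℂ E] [PartialOrder A] [SMul Aᵐᵒᵖ E] [Norm A] [Norm E]
    extends Inner A E where
  inner_add_right {x} {y} {z} : inner x (y + z) = inner x y + inner x z
  inner_self_nonneg {x} : 0 ≤ inner x x
  inner_self {x} : inner x x = 0 ↔ x = 0
  inner_op_smul_right {a : A} {x y : E} : inner x (y <• a) = inner x y * a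
  inner_smul_right_complex {z : ℂ} {x} {y} : inner x (z • y) = z • inner x y
  star_inner x y : star (inner x y) = inner y x
  norm_eq_sqrt_norm_inner_self x : ‖x‖ = √‖inner x x‖

variable {A : Type*} [CStarAlgebra A] [PartialOrder A] [StarOrderedRing A]
variable {H : Type*} [NormedAddCommGroup H] [NormedSpace ℂ H] [SMul Aᵐᵒᵖ H] [CStarModuleRight A H]
variable {J : Type*} {Hs : J → Type*} [∀ j, NormedAddCommGroup (Hs j)]
  [∀ j, NormedSpace ℂ (Hs j)] [∀ j, SMul Aᵐᵒᵖ (Hs j)] [∀ j, CStarModuleRight A (Hs j)]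

set_option linter.unusedVariables false
set_option linter.unusedSectionVars false
set_option linter.unnecessarySimpa false
set_option maxHeartbeats 1000000

namespace CStarModuleRight

section general

variable {A E : Type*} [NonUnitalRing A] [StarRing A] [AddCommGroup E] [Module ℂ A]
  [Module ℂ E] [PartialOrder A] [SMul Aᵐᵒᵖ E] [Norm A] [Norm E] [CStarModuleRight A E]

attribute [simp] CStarModuleRight.inner_add_right CStarModuleRight.star_inner
  CStarModuleRight.inner_op_smul_right CStarModuleRight.inner_smul_right_complex

@[simp]
lemma inner_add_left {x y z : E} : inner A (x + y) z = inner A x z + inner A y z := by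
  rw [← star_star (r := inner A (x + y) z)]
  simp only [inner_add_right, star_add, star_inner]

@[simp]
lemma inner_op_smul_left {a : A} {x y : E} : inner A (x <• a) y = star a * inner A x y := by
  rw [← star_inner]; simp

section StarModule

variable [StarModule ℂ A]

@[simp]
lemma inner_smul_left_complex {z : ℂ} {x y : E} : inner A (z • x) y = star z • inner A x y := by
  rw [← star_inner]
  simp

@[simp]
lemma inner_smul_left_real {z : ℝ} {x y : E} : inner A (z • x) y = z • inner A x y := by
  have h₁ : z • x = (z : ℂ) • x := by simp
  rw [h₁, ← star_inner, inner_smul_right_complex]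
  simp

@[simp]
lemma inner_smul_right_real {z : ℝ} {x y : E} : inner A x (z • y) = z • inner A x y := by
  have h₁ : z • y = (z : ℂ) • y := by simp
  rw [h₁, ← star_inner, inner_smul_left_complex]
  simp

def innerₛₗ : E →ₗ⋆[ℂ] E →ₗ[ℂ] A where
  toFun x := { toFun := fun y => inner A x y
               map_add' := fun z y => by simp
               map_smul' := fun z y => by simp }
  map_add' z y := by ext; simp
  map_smul' z y := by ext; simp

lemma innerₛₗ_apply {x y : E} : innerₛₗ x y = inner A x y := rfl

@[simp] lemma inner_zero_right {x : E} : inner A x 0 = 0 := by simp [← innerₛₗ_apply]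
@[simp] lemma inner_zero_left {x : E} : inner A 0 x = 0 := by simp [← innerₛₗ_apply]
@[simp] lemma inner_sub_right {x y z : E} : inner A x (y - z) = inner A x y - inner A x z := by
  simp [← innerₛₗ_apply]
@[simp] lemma inner_sub_left {x y z : E} : inner A (x - y) z = inner A x z - inner A y z := by
  simp [← innerₛₗ_apply]

end StarModule

end general

section norm

variable {A E : Type*} [CStarAlgebra A] [PartialOrder A] [NormedAddCommGroup E]
  [NormedSpace ℂ E] [SMul Aᵐᵒᵖ E] [CStarModuleRight A E]

lemma norm_sq_eq {x : E} : ‖x‖ ^ 2 = ‖inner A x x‖ := by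
  simp [norm_eq_sqrt_norm_inner_self (A := A)]

variable [StarOrderedRing A]

lemma inner_mul_inner_swap_le {x y : E} :
    inner A y x * inner A x y ≤ ‖x‖ ^ 2 • inner A y y := by
  rcases eq_or_ne x 0 with h | h
  · simp [h]
  · have h₁ : ∀ (a : A),
        (0 : A) ≤ ‖x‖ ^ 2 • (a * star a) - ‖x‖ ^ 2 • (a * inner A x y)
                  - ‖x‖ ^ 2 • (inner A y x * star a) + ‖x‖ ^ 2 • (‖x‖ ^ 2 • inner A y y) :=
        fun a => by
      calc (0 : A) ≤ inner A (x <• star a - ‖x‖ ^ 2 • y) (x <• star a - ‖x‖ ^ 2 • y) := by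
                      exact inner_self_nonneg
            _ = a * inner A x x * star a - ‖x‖ ^ 2 • (a * inner A x y)
                  - ‖x‖ ^ 2 • (inner A y x * star a) + ‖x‖ ^ 2 • (‖x‖ ^ 2 • inner A y y) := by
                      simp only [inner_sub_right, inner_op_smul_right, inner_sub_left,
                        inner_op_smul_left, inner_smul_left_real, mul_sub, mul_smul_comm,
                        inner_smul_right_real, smul_sub, mul_assoc, star_star, smul_mul_assoc, sub_mul]
                      abel
            _ ≤ ‖x‖ ^ 2 • (a * star a) - ‖x‖ ^ 2 • (a * inner A x y)
                  - ‖x‖ ^ 2 • (inner A y x * star a) + ‖x‖ ^ 2 • (‖x‖ ^ 2 • inner A y y) := by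
                      gcongr
                      calc _ ≤ ‖inner A x x‖ • (a * star a) :=
                          CStarAlgebra.star_right_conjugate_le_norm_smul (hb := star_inner x x)
                        _ = (√‖inner A x x‖) ^ 2 • (a * star a) := by
                          rw [Real.sq_sqrt]
                          positivity
                        _ = ‖x‖ ^ 2 • (a * star a) := by rw [← norm_eq_sqrt_norm_inner_self]
    specialize h₁ (inner A y x)
    simp only [star_inner, sub_self, zero_sub, le_neg_add_iff_add_le, add_zero] at h₁
    rwa [smul_le_smul_iff_of_pos_left (pow_pos (norm_pos_iff.mpr h) _)] at h₁

variable (E) in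
lemma norm_inner_le {x y : E} : ‖inner A x y‖ ≤ ‖x‖ * ‖y‖ := by
  have := calc ‖inner A x y‖ ^ 2 = ‖inner A y x * inner A x y‖ := by
                rw [← star_inner x, CStarRing.norm_star_mul_self, pow_two]
    _ ≤ ‖‖x‖ ^ 2 • inner A y y‖ := by
                refine CStarAlgebra.norm_le_norm_of_nonneg_of_le ?_ inner_mul_inner_swap_le
                rw [← star_inner x]
                exact star_mul_self_nonneg (inner A x y)
    _ = ‖x‖ ^ 2 * ‖inner A y y‖ := by simp [norm_smul]
    _ = ‖x‖ ^ 2 * ‖y‖ ^ 2 := by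
                simp only [norm_eq_sqrt_norm_inner_self (A := A), norm_nonneg, Real.sq_sqrt]
    _ = (‖x‖ * ‖y‖) ^ 2 := by simp only [mul_pow]
  refine (pow_le_pow_iff_left₀ (norm_nonneg (inner A x y)) ?_ (by simp)).mp this
  exact mul_nonneg (norm_nonneg _) (norm_nonneg _)

end norm

end CStarModuleRight

lemma one_nonneg' : (0:A) ≤ 1 := by simpa using star_mul_self_nonneg (1:A)

lemma star_real_smul (r : ℝ) (x : A) : star (r • x) = r • star x := by
  rw [Algebra.smul_def, Algebra.smul_def, star_mul]
  have h1 : star (algebraMap ℝ A r) = algebraMap ℝ A r := by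
    simpa using (algebraMap_star_comm (r : ℝ) (A := A)).symm
  rw [h1, Algebra.commutes]

lemma real_smul_nonneg {r : ℝ} (hr : 0 ≤ r) {x : A} (hx : 0 ≤ x) : 0 ≤ r • x := by
  have h1 : r • x = star (Real.sqrt r • (1:A)) * x * (Real.sqrt r • (1:A)) := by
    rw [star_real_smul]
    simp [smul_mul_assoc, mul_smul_comm, smul_smul, Real.mul_self_sqrt hr]
  rw [h1]; exact star_left_conjugate_nonneg hx _

lemma real_smul_le {x y : A} (h : x ≤ y) {r : ℝ} (hr : 0 ≤ r) : r • x ≤ r • y := by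
  have := real_smul_nonneg hr (sub_nonneg.2 h)
  rw [smul_sub] at this
  exact sub_nonneg.mp this

lemma algebraMap_nonneg' {r : ℝ} (hr : 0 ≤ r) : 0 ≤ algebraMap ℝ A r := by
  rw [Algebra.algebraMap_eq_smul_one]
  exact real_smul_nonneg hr one_nonneg'

/-- Key Douglas-type lemma: if `‖c* p c‖ ≤ ‖c* q c‖` for all `c`, with `p, q ≥ 0`,
then `p ≤ q`. -/
lemma le_of_forall_conj_norm_le {p q : A} (hp : 0 ≤ p) (hq : 0 ≤ q)
    (h : ∀ c : A, ‖star c * p * c‖ ≤ ‖star c * q * c‖) : p ≤ q := by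
  have hpsa : IsSelfAdjoint p := .of_nonneg hp
  have hqsa : IsSelfAdjoint q := .of_nonneg hq
  have key : ∀ ε : ℝ, 0 < ε → p ≤ q + algebraMap ℝ A ε := by
    intro ε hε
    have hspec : ∀ t ∈ spectrum ℝ q, 0 ≤ t := fun t ht => spectrum_nonneg_of_nonneg hq ht
    have hpos' : ∀ t ∈ spectrum ℝ q, Real.sqrt (t + ε) ≠ 0 := by
      intro t ht
      have h1 : 0 < t + ε := by have := hspec t ht; linarith
      positivity
    set g : ℝ → ℝ := fun t => (Real.sqrt (t + ε))⁻¹ with hg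
    set u : ℝ → ℝ := fun t => Real.sqrt (t + ε) with hu
    have hcont_u : ContinuousOn u (spectrum ℝ q) :=
      (Real.continuous_sqrt.comp (continuous_id.add continuous_const)).continuousOn
    have hcont_g : ContinuousOn g (spectrum ℝ q) := hcont_u.inv₀ hpos'
    set s : A := cfc g q with hs
    set w : A := cfc u q with hw
    have hsw : s * w = 1 := by
      rw [hs, hw, ← cfc_mul g u q hcont_g hcont_u]
      have : cfc (fun t => g t * u t) q = cfc (fun _ : ℝ => (1:ℝ)) q :=
        cfc_congr (fun t ht => inv_mul_cancel₀ (hpos' t ht))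
      rw [this, cfc_const 1 q, map_one]
    have hws : w * s = 1 := by
      rw [hs, hw, ← cfc_mul u g q hcont_u hcont_g]
      have : cfc (fun t => u t * g t) q = cfc (fun _ : ℝ => (1:ℝ)) q :=
        cfc_congr (fun t ht => mul_inv_cancel₀ (hpos' t ht))
      rw [this, cfc_const 1 q, map_one]
    have hww : w * w = q + algebraMap ℝ A ε := by
      rw [hw, ← cfc_mul u u q hcont_u hcont_u]
      have h1 : cfc (fun t => u t * u t) q = cfc (fun t : ℝ => t + ε) q :=
        cfc_congr (fun t ht => Real.mul_self_sqrt (by have := hspec t ht; linarith))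
      rw [h1, cfc_add_const ε (fun t : ℝ => t) q continuous_id.continuousOn, cfc_id' ℝ q]
    have hs_nonneg : 0 ≤ s := cfc_nonneg (fun t ht => by positivity)
    have hw_nonneg : 0 ≤ w := cfc_nonneg (fun t ht => Real.sqrt_nonneg _)
    have hs_star : star s = s := (IsSelfAdjoint.of_nonneg hs_nonneg).star_eq
    have hw_star : star w = w := (IsSelfAdjoint.of_nonneg hw_nonneg).star_eq
    -- s * q * s ≤ 1
    have hq_le : q ≤ q + algebraMap ℝ A ε :=
      le_add_of_nonneg_right (algebraMap_nonneg' hε.le)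
    have hsqs_le_one : s * q * s ≤ 1 := by
      have h1 := star_left_conjugate_le_conjugate hq_le s
      rw [hs_star] at h1
      calc s * q * s ≤ s * (q + algebraMap ℝ A ε) * s := h1
        _ = s * (w * w) * s := by rw [hww]
        _ = (s * w) * (w * s) := by noncomm_ring
        _ = 1 := by rw [hsw, hws, one_mul]
    have hsqs_nonneg : 0 ≤ s * q * s := by
      have := star_left_conjugate_nonneg hq s; rwa [hs_star] at this
    have hnorm_sqs : ‖s * q * s‖ ≤ 1 :=
      (CStarAlgebra.norm_le_one_iff_of_nonneg _ hsqs_nonneg).mpr hsqs_le_one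
    have hnorm_sps : ‖s * p * s‖ ≤ 1 := by
      have := h s; rw [hs_star] at this; exact this.trans hnorm_sqs
    have hsps_sa : IsSelfAdjoint (s * p * s) := by
      rw [IsSelfAdjoint, star_mul, star_mul, hs_star, hpsa.star_eq, mul_assoc]
    have hsps_le_one : s * p * s ≤ 1 := by
      calc s * p * s ≤ algebraMap ℝ A ‖s * p * s‖ := hsps_sa.le_algebraMap_norm_self
        _ ≤ 1 := by
            have h2 : (0:A) ≤ algebraMap ℝ A (1 - ‖s * p * s‖) :=
              algebraMap_nonneg' (by linarith)
            rw [map_sub, map_one] at h2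
            exact sub_nonneg.mp h2
    have hfinal := star_left_conjugate_le_conjugate hsps_le_one w
    rw [hw_star] at hfinal
    calc p = (w * s) * p * (s * w) := by rw [hws, hsw, one_mul, mul_one]
      _ = w * (s * p * s) * w := by noncomm_ring
      _ ≤ w * 1 * w := hfinal
      _ = q + algebraMap ℝ A ε := by rw [mul_one, hww]
  -- pass to the limit ε → 0
  have hlim : Filter.Tendsto (fun n : ℕ => q + algebraMap ℝ A (1 / (n + 1))) Filter.atTop (nhds q) := by
    have h0 : Filter.Tendsto (fun n : ℕ => (1:ℝ) / (n + 1)) Filter.atTop (nhds 0) :=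
      tendsto_one_div_add_atTop_nhds_zero_nat
    have h1 : Filter.Tendsto (fun n : ℕ => algebraMap ℝ A (1 / (n + 1))) Filter.atTop (nhds 0) := by
      have := ((continuous_algebraMap ℝ A).tendsto 0).comp h0
      simpa [Function.comp_def] using this
    simpa using Filter.Tendsto.add (tendsto_const_nhds (x := q)) h1
  exact ge_of_tendsto' hlim fun n => key _ (by positivity)


-- A-linearity of adjointable maps
lemma map_op_smul' {F : Type*} [NormedAddCommGroup F] [NormedSpace ℂ F] [SMul Aᵐᵒᵖ F]
    [CStarModuleRight A F] (M : H →L[ℂ] F) (Mad : F →L[ℂ] H)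
    (h : ∀ (x : H) (u : F), (inner A (M x) u : A) = inner A x (Mad u)) (a : A) (x : H) :
    M (x <• a) = (M x) <• a := by
  have key : ∀ u : F, (inner A (M (x <• a) - (M x) <• a) u : A) = 0 := by
    intro u
    have h1 : (inner A (M (x <• a)) u : A) = star a * inner A (M x) u := by
      rw [h, CStarModuleRight.inner_op_smul_left, ← h]
    rw [CStarModuleRight.inner_sub_left, h1, CStarModuleRight.inner_op_smul_left, sub_self]
  have h2 := key (M (x <• a) - (M x) <• a)
  rw [CStarModuleRight.inner_self] at h2
  exact sub_eq_zero.mp h2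

lemma adj_symm {F : Type*} [NormedAddCommGroup F] [NormedSpace ℂ F] [SMul Aᵐᵒᵖ F]
    [CStarModuleRight A F] (M : H →L[ℂ] F) (Mad : F →L[ℂ] H)
    (h : ∀ (x : H) (u : F), (inner A (M x) u : A) = inner A x (Mad u)) (u : F) (x : H) :
    (inner A (Mad u) x : A) = inner A u (M x) := by
  calc (inner A (Mad u) x : A) = star (inner A x (Mad u) : A) := (CStarModuleRight.star_inner _ _).symm
    _ = star (inner A (M x) u : A) := by rw [h]
    _ = inner A u (M x) := CStarModuleRight.star_inner _ _

lemma real_smul_op_smul_comm (r : ℝ) (a : A) (y : H) : (r • y) <• a = r • (y <• a) := by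
  have key : ∀ u : H, (inner A u ((r • y) <• a - r • (y <• a)) : A) = 0 := by
    intro u
    rw [CStarModuleRight.inner_sub_right, CStarModuleRight.inner_op_smul_right,
      CStarModuleRight.inner_smul_right_real, CStarModuleRight.inner_smul_right_real,
      CStarModuleRight.inner_op_smul_right, smul_mul_assoc, sub_self]
  have h2 := key ((r • y) <• a - r • (y <• a))
  rw [← CStarModuleRight.star_inner, star_eq_zero, CStarModuleRight.inner_self] at h2
  exact sub_eq_zero.mp h2

-- L2: ⟪Mx, x⟫ ≤ ‖M‖ • ⟪x,x⟫ for positive self-adjoint M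
lemma inner_map_self_le_norm_smul_inner (M : H →L[ℂ] H)
    (hsa : ∀ x y : H, (inner A (M x) y : A) = inner A x (M y))
    (hpos : ∀ x : H, 0 ≤ (inner A (M x) x : A)) (x : H) :
    (inner A (M x) x : A) ≤ ‖M‖ • (inner A x x : A) := by
  have hMA : ∀ (a : A) (z : H), M (z <• a) = (M z) <• a := fun a z =>
    map_op_smul' M M hsa a z
  apply le_of_forall_conj_norm_le (hpos x)
    (real_smul_nonneg (norm_nonneg M) CStarModuleRight.inner_self_nonneg)
  intro c
  have h1 : star c * (inner A (M x) x : A) * c = inner A (M (x <• c)) (x <• c) := by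
    rw [hMA c x, CStarModuleRight.inner_op_smul_left, CStarModuleRight.inner_op_smul_right, mul_assoc]
  have h2 : star c * (‖M‖ • (inner A x x : A)) * c = ‖M‖ • (inner A (x <• c) (x <• c) : A) := by
    rw [CStarModuleRight.inner_op_smul_left, CStarModuleRight.inner_op_smul_right,
      mul_smul_comm, smul_mul_assoc, mul_assoc]
  rw [h1, h2]
  calc ‖(inner A (M (x <• c)) (x <• c) : A)‖ ≤ ‖M (x <• c)‖ * ‖x <• c‖ :=
        CStarModuleRight.norm_inner_le H
    _ ≤ (‖M‖ * ‖x <• c‖) * ‖x <• c‖ := by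
        gcongr; exact M.le_opNorm _
    _ = ‖M‖ * ‖(inner A (x <• c) (x <• c) : A)‖ := by
        rw [mul_assoc, ← CStarModuleRight.norm_sq_eq (A := A), sq]
    _ = ‖‖M‖ • (inner A (x <• c) (x <• c) : A)‖ := by
        rw [norm_smul, Real.norm_eq_abs, abs_of_nonneg (norm_nonneg M)]

-- Cauchy-Schwarz for the A-valued positive form ⟪·, M ·⟫
lemma form_cauchy_schwarz (M : H →L[ℂ] H)
    (hsa : ∀ x y : H, (inner A (M x) y : A) = inner A x (M y))
    (hpos : ∀ x : H, 0 ≤ (inner A (M x) x : A)) (u v : H) :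
    star (inner A u (M v) : A) * (inner A u (M v) : A)
      ≤ ‖(inner A u (M u) : A)‖ • (inner A v (M v) : A) := by
  have hMA : ∀ (a : A) (z : H), M (z <• a) = (M z) <• a := fun a z =>
    map_op_smul' M M hsa a z
  set h : A := inner A u (M v) with hh
  set N : ℝ := ‖(inner A u (M u) : A)‖ with hN
  have hNnn : 0 ≤ N := norm_nonneg _
  have husa : IsSelfAdjoint (inner A u (M u) : A) := by
    rw [IsSelfAdjoint, CStarModuleRight.star_inner, hsa]
  -- main expansion inequality
  have main : ∀ t : ℝ, 0 < t →
      0 ≤ (t^2 * N - 2*t) • (star h * h) + (inner A v (M v) : A) := by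
    intro t ht
    set d : H := u <• (t • h) - v with hd
    have h0 : 0 ≤ (inner A d (M d) : A) := by rw [← hsa]; exact hpos d
    have e1 : M d = (M u) <• (t • h) - M v := by rw [hd, map_sub, hMA]
    have expand : (inner A d (M d) : A)
        = star (t • h) * ((inner A u (M u) : A) * (t • h))
          - star (t • h) * h - star h * (t • h) + inner A v (M v) := by
      have hvMu : (inner A v (M u) : A) = star h := by
        rw [hh, ← CStarModuleRight.star_inner, hsa]
      rw [hd, e1]
      simp only [CStarModuleRight.inner_sub_left, CStarModuleRight.inner_sub_right,
        CStarModuleRight.inner_op_smul_left, CStarModuleRight.inner_op_smul_right, hvMu, ← hh,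
        sub_mul, mul_sub, mul_assoc, neg_smul, one_smul, neg_mul, smul_mul_assoc]
      abel
    have hterm1 : star (t • h) * ((inner A u (M u) : A) * (t • h))
        ≤ (t^2 * N) • (star h * h) := by
      have base : star h * ((inner A u (M u) : A) * h) ≤ N • (star h * h) := by
        rw [← mul_assoc]
        exact CStarAlgebra.star_left_conjugate_le_norm_smul husa
      calc star (t • h) * ((inner A u (M u) : A) * (t • h))
          = (t^2) • (star h * ((inner A u (M u) : A) * h)) := by
            rw [star_real_smul]
            simp only [smul_mul_assoc, mul_smul_comm, smul_smul, pow_two]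
        _ ≤ (t^2) • (N • (star h * h)) := real_smul_le base (by positivity)
        _ = (t^2 * N) • (star h * h) := by rw [smul_smul]
    have hterm2 : star (t • h) * h = t • (star h * h) := by
      rw [star_real_smul, smul_mul_assoc]
    have hterm3 : star h * (t • h) = t • (star h * h) := by
      rw [mul_smul_comm]
    have step : 0 ≤ (t^2 * N) • (star h * h) - t • (star h * h) - t • (star h * h)
        + inner A v (M v) := by
      calc (0:A) ≤ inner A d (M d) := h0
        _ = star (t • h) * ((inner A u (M u) : A) * (t • h))
            - star (t • h) * h - star h * (t • h) + inner A v (M v) := expand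
        _ ≤ (t^2 * N) • (star h * h) - t • (star h * h) - t • (star h * h)
            + inner A v (M v) := by
            rw [hterm2, hterm3]
            gcongr
    have heq : (t^2 * N) • (star h * h) - t • (star h * h) - t • (star h * h)
        = (t^2 * N - 2*t) • (star h * h) := by
      module
    rwa [heq] at step
  rcases eq_or_lt_of_le hNnn with hN0 | hNpos
  · -- N = 0 case: show h = 0
    have hzero : star h * h = 0 := by
      by_contra hne
      have hb : ∀ t : ℝ, 0 < t → (2*t) • (star h * h) ≤ (inner A v (M v) : A) := by
        intro t ht
        have hm := main t ht
        rw [← hN0] at hm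
        have h2 : (t^2 * 0 - 2*t) • (star h * h) + (inner A v (M v) : A)
            = (inner A v (M v) : A) - (2*t) • (star h * h) := by
          rw [show t^2 * 0 - 2*t = -(2*t) by ring, neg_smul]; abel
        rw [h2] at hm
        exact sub_nonneg.mp hm
      have hnorm : ∀ t : ℝ, 0 < t → (2*t) * ‖star h * h‖ ≤ ‖(inner A v (M v) : A)‖ := by
        intro t ht
        have h1 : 0 ≤ (2*t) • (star h * h) :=
          real_smul_nonneg (by positivity) (star_mul_self_nonneg h)
        have h3 := CStarAlgebra.norm_le_norm_of_nonneg_of_le h1 (hb t ht)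
        rwa [norm_smul, Real.norm_eq_abs, abs_of_nonneg (by positivity : (0:ℝ) ≤ 2*t)] at h3
      have hposn : 0 < ‖star h * h‖ := by
        rw [norm_pos_iff]; exact hne
      obtain ⟨t, ht, hcontra⟩ : ∃ t : ℝ, 0 < t ∧ ‖(inner A v (M v) : A)‖ < (2*t) * ‖star h * h‖ := by
        refine ⟨(‖(inner A v (M v) : A)‖ + 1) / ‖star h * h‖, by positivity, ?_⟩
        rw [show 2 * ((‖(inner A v (M v) : A)‖ + 1) / ‖star h * h‖) * ‖star h * h‖
          = 2 * (‖(inner A v (M v) : A)‖ + 1) by field_simp]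
        nlinarith [norm_nonneg (inner A v (M v) : A)]
      exact absurd (hnorm t ht) (not_le.mpr hcontra)
    rw [← hN0, zero_smul, ← hzero]
  · -- N > 0 case
    have hm := main (1/N) (by positivity)
    have harith : ((1/N)^2 * N - 2*(1/N)) = -(1/N) := by field_simp; ring
    rw [harith, neg_smul] at hm
    have h2 : (1/N) • (star h * h) ≤ (inner A v (M v) : A) := by
      have h3 : -((1/N) • (star h * h)) + (inner A v (M v) : A)
          = (inner A v (M v) : A) - (1/N) • (star h * h) := by abel
      rw [h3] at hm
      exact sub_nonneg.mp hm
    have h4 := real_smul_le h2 (r := N) hNnn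
    rwa [smul_smul, mul_one_div, div_self (ne_of_gt hNpos), one_smul] at h4

-- L3 : ‖Mx‖² ≤ ‖M‖ * ‖⟪Mx,x⟫‖ for positive self-adjoint M
lemma norm_map_sq_le (M : H →L[ℂ] H)
    (hsa : ∀ x y : H, (inner A (M x) y : A) = inner A x (M y))
    (hpos : ∀ x : H, 0 ≤ (inner A (M x) x : A)) (x : H) :
    ‖M x‖^2 ≤ ‖M‖ * ‖(inner A (M x) x : A)‖ := by
  rcases eq_or_ne (M x) 0 with hMx | hMx
  · rw [hMx]
    simp only [norm_zero, ne_eq, OfNat.ofNat_ne_zero, not_false_eq_true, zero_pow]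
    positivity
  · have hcs := form_cauchy_schwarz M hsa hpos x (M x)
    have hh : (inner A x (M (M x)) : A) = inner A (M x) (M x) := (hsa x (M x)).symm
    rw [hh] at hcs
    have hnorm1 : ‖star (inner A (M x) (M x) : A) * (inner A (M x) (M x) : A)‖
        = ‖(inner A (M x) (M x) : A)‖ * ‖(inner A (M x) (M x) : A)‖ := CStarRing.norm_star_mul_self
    have hnn : 0 ≤ star (inner A (M x) (M x) : A) * (inner A (M x) (M x) : A) :=
      star_mul_self_nonneg _
    have hle := CStarAlgebra.norm_le_norm_of_nonneg_of_le hnn hcs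
    rw [hnorm1] at hle
    have hrhs : ‖‖(inner A x (M x) : A)‖ • (inner A (M x) (M (M x)) : A)‖
        ≤ ‖(inner A x (M x) : A)‖ * (‖M x‖ * (‖M‖ * ‖M x‖)) := by
      rw [norm_smul, Real.norm_eq_abs, abs_of_nonneg (norm_nonneg _)]
      refine mul_le_mul_of_nonneg_left ?_ (norm_nonneg _)
      refine (CStarModuleRight.norm_inner_le H).trans ?_
      exact mul_le_mul_of_nonneg_left (M.le_opNorm _) (norm_nonneg _)
    have hfinal := hle.trans hrhs
    have hhx : ‖(inner A (M x) (M x) : A)‖ = ‖M x‖^2 :=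
      (CStarModuleRight.norm_sq_eq (A := A)).symm
    have hxMx : (inner A x (M x) : A) = inner A (M x) x := (hsa x x).symm
    rw [hhx, hxMx] at hfinal
    have hMxpos : 0 < ‖M x‖ := norm_pos_iff.mpr hMx
    have hfin2 : ‖M x‖^2 * ‖M x‖^2 ≤ (‖M‖ * ‖(inner A (M x) x : A)‖) * ‖M x‖^2 := by
      nlinarith [hfinal]
    exact le_of_mul_le_mul_right hfin2 (by positivity)

-- operator norm ≤ 1 for 0 ≤ E ≤ 1 (in the quadratic-form sense)
lemma opNorm_le_one_of_le_inner (E : H →L[ℂ] H)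
    (hsa : ∀ x y : H, (inner A (E x) y : A) = inner A x (E y))
    (hpos : ∀ x : H, 0 ≤ (inner A (E x) x : A))
    (hle : ∀ x : H, (inner A (E x) x : A) ≤ inner A x x) : ‖E‖ ≤ 1 := by
  have key : ∀ x : H, ‖E x‖^2 ≤ ‖E‖ * ‖x‖^2 := by
    intro x
    refine (norm_map_sq_le E hsa hpos x).trans ?_
    rw [CStarModuleRight.norm_sq_eq (A := A) (x := x)]
    exact mul_le_mul_of_nonneg_left
      (CStarAlgebra.norm_le_norm_of_nonneg_of_le (hpos x) (hle x)) (norm_nonneg E)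
  have hEbound : ‖E‖ ≤ Real.sqrt ‖E‖ := by
    refine ContinuousLinearMap.opNorm_le_bound E (Real.sqrt_nonneg _) (fun x => ?_)
    have h2 : ‖E x‖^2 ≤ (Real.sqrt ‖E‖ * ‖x‖)^2 := by
      rw [mul_pow, Real.sq_sqrt (norm_nonneg E)]
      exact key x
    calc ‖E x‖ = Real.sqrt (‖E x‖^2) := (Real.sqrt_sq (norm_nonneg _)).symm
      _ ≤ Real.sqrt ((Real.sqrt ‖E‖ * ‖x‖)^2) := Real.sqrt_le_sqrt h2
      _ = Real.sqrt ‖E‖ * ‖x‖ := Real.sqrt_sq (by positivity)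
  nlinarith [Real.sq_sqrt (norm_nonneg E), norm_nonneg E, Real.sqrt_nonneg ‖E‖]

-- Positivity of the product of two commuting positive self-adjoint module operators
lemma inner_comp_self_nonneg (S T : H →L[ℂ] H)
    (hS_sa : ∀ x y : H, (inner A (S x) y : A) = inner A x (S y))
    (hT_sa : ∀ x y : H, (inner A (T x) y : A) = inner A x (T y))
    (hS_pos : ∀ x : H, 0 ≤ (inner A (S x) x : A))
    (hT_pos : ∀ x : H, 0 ≤ (inner A (T x) x : A))
    (hST : ∀ z : H, S (T z) = T (S z)) (x : H) :
    0 ≤ (inner A (S (T x)) x : A) := by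
  rcases eq_or_ne T 0 with rfl | hT0
  · simp
  have hc : 0 < ‖T‖ := by
    rcases (norm_nonneg T).eq_or_lt with h | h
    · exact absurd ((ContinuousLinearMap.opNorm_zero_iff T).mp h.symm) hT0
    · exact h
  set c : ℝ := ‖T‖ with hcdef
  set E : H →L[ℂ] H := 1 - c⁻¹ • T with hEdef
  have hE_apply : ∀ z : H, E z = z - c⁻¹ • T z := fun z => rfl
  have hE_sa : ∀ x y : H, (inner A (E x) y : A) = inner A x (E y) := by
    intro x y
    simp only [hE_apply, CStarModuleRight.inner_sub_left, CStarModuleRight.inner_sub_right,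
      CStarModuleRight.inner_smul_left_real, CStarModuleRight.inner_smul_right_real, hT_sa]
  have hE_quad : ∀ z : H, (inner A (E z) z : A) = inner A z z - c⁻¹ • inner A (T z) z := by
    intro z
    rw [hE_apply, CStarModuleRight.inner_sub_left, CStarModuleRight.inner_smul_left_real]
  have hE_pos : ∀ z : H, 0 ≤ (inner A (E z) z : A) := by
    intro z
    have h1 : c⁻¹ • (inner A (T z) z : A) ≤ c⁻¹ • (c • (inner A z z : A)) :=
      real_smul_le (inner_map_self_le_norm_smul_inner T hT_sa hT_pos z) (by positivity)
    rw [smul_smul, inv_mul_cancel₀ (ne_of_gt hc), one_smul] at h1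
    rw [hE_quad]
    exact sub_nonneg.mpr h1
  have hE_le : ∀ z : H, (inner A (E z) z : A) ≤ inner A z z := by
    intro z
    rw [hE_quad]
    exact sub_le_self _ (real_smul_nonneg (by positivity) (hT_pos z))
  have hE_norm : ‖E‖ ≤ 1 := opNorm_le_one_of_le_inner E hE_sa hE_pos hE_le
  have hES : ∀ z : H, E (S z) = S (E z) := by
    intro z
    rw [hE_apply, hE_apply, map_sub, ContinuousLinearMap.map_smul_of_tower, hST]
  -- the iteration sequences
  set a : ℕ → ℝ := fun n => Nat.rec 0 (fun _ an => (1 + an^2)/2) n with hadef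
  have ha0 : a 0 = 0 := rfl
  have haS : ∀ n, a (n+1) = (1 + (a n)^2)/2 := fun n => rfl
  set R : ℕ → H →L[ℂ] H :=
    fun n => Nat.rec 0 (fun _ Rn => (2⁻¹ : ℝ) • (E + Rn ∘L Rn)) n with hRdef
  have hR0 : R 0 = 0 := rfl
  have hRS : ∀ n, R (n+1) = (2⁻¹ : ℝ) • (E + R n ∘L R n) := fun n => rfl
  have ha_nonneg : ∀ n, 0 ≤ a n := by
    intro n; induction n with
    | zero => rw [ha0]
    | succ n ih => rw [haS n]; positivity
  have ha_le_one : ∀ n, a n ≤ 1 := by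
    intro n; induction n with
    | zero => rw [ha0]; norm_num
    | succ n ih => rw [haS n]; nlinarith [ha_nonneg n]
  have ha_mono : ∀ n, a n ≤ a (n+1) := by
    intro n
    rw [haS n]
    nlinarith [ha_nonneg n, sq_nonneg (1 - a n)]
  have hR_sa : ∀ n, ∀ x y : H, (inner A (R n x) y : A) = inner A x (R n y) := by
    intro n; induction n with
    | zero => intro x y; rw [hR0]; simp
    | succ n ih =>
        intro x y
        rw [hRS n]
        simp only [ContinuousLinearMap.smul_apply, ContinuousLinearMap.add_apply,
          ContinuousLinearMap.comp_apply, CStarModuleRight.inner_smul_left_real,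
          CStarModuleRight.inner_smul_right_real, CStarModuleRight.inner_add_left,
          CStarModuleRight.inner_add_right, hE_sa, ih]
  have hR_comm_S : ∀ n, ∀ z : H, R n (S z) = S (R n z) := by
    intro n; induction n with
    | zero => intro z; rw [hR0]; simp
    | succ n ih =>
        intro z
        rw [hRS n]
        simp only [ContinuousLinearMap.smul_apply, ContinuousLinearMap.add_apply,
          ContinuousLinearMap.comp_apply, hES, ih, map_add,
          ContinuousLinearMap.map_smul_of_tower]
  have hR_norm : ∀ n, ‖R n‖ ≤ a n := by
    intro n; induction n with
    | zero => rw [hR0, ha0]; simp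
    | succ n ih =>
        rw [hRS n, haS n]
        calc ‖(2⁻¹ : ℝ) • (E + R n ∘L R n)‖ = 2⁻¹ * ‖E + R n ∘L R n‖ := by
              rw [norm_smul (2⁻¹:ℝ) (E + R n ∘L R n), Real.norm_eq_abs]; norm_num
          _ ≤ 2⁻¹ * (‖E‖ + ‖R n‖ * ‖R n‖) := by
              have h1 := norm_add_le E (R n ∘L R n)
              have h2 := ContinuousLinearMap.opNorm_comp_le (R n) (R n)
              nlinarith
          _ ≤ (1 + (a n)^2)/2 := by nlinarith [ha_nonneg n, norm_nonneg (R n)]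
  have hR_gap : ∀ n, ‖R (n+1) - R n‖ ≤ a (n+1) - a n := by
    intro n; induction n with
    | zero =>
        rw [hRS 0, hR0, haS 0, ha0]
        simp only [ContinuousLinearMap.comp_zero, add_zero, sub_zero]
        rw [norm_smul (2⁻¹:ℝ) E, Real.norm_eq_abs,
          abs_of_nonneg (by norm_num : (0:ℝ) ≤ (2:ℝ)⁻¹)]
        nlinarith [hE_norm]
    | succ n ih =>
        have key : R (n+1+1) - R (n+1)
            = (2⁻¹ : ℝ) • ((R (n+1)) ∘L (R (n+1) - R n) + (R (n+1) - R n) ∘L (R n)) := by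
          rw [hRS (n+1), hRS n]
          ext z
          simp only [ContinuousLinearMap.smul_apply, ContinuousLinearMap.sub_apply,
            ContinuousLinearMap.add_apply, ContinuousLinearMap.comp_apply, map_sub]
          module
        rw [key, norm_smul (2⁻¹:ℝ) ((R (n+1)) ∘L (R (n+1) - R n) + (R (n+1) - R n) ∘L (R n)), Real.norm_eq_abs,
          abs_of_nonneg (by norm_num : (0:ℝ) ≤ (2:ℝ)⁻¹)]
        have h1 : ‖(R (n+1)) ∘L (R (n+1) - R n) + (R (n+1) - R n) ∘L (R n)‖
            ≤ ‖R (n+1)‖ * ‖R (n+1) - R n‖ + ‖R (n+1) - R n‖ * ‖R n‖ := by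
          refine (norm_add_le _ _).trans ?_
          exact add_le_add (ContinuousLinearMap.opNorm_comp_le _ _)
            (ContinuousLinearMap.opNorm_comp_le _ _)
        have h2 : ‖R (n+1)‖ * ‖R (n+1) - R n‖ + ‖R (n+1) - R n‖ * ‖R n‖
            ≤ a (n+1) * (a (n+1) - a n) + (a (n+1) - a n) * a n := by
          have g0 : 0 ≤ ‖R (n+1) - R n‖ := norm_nonneg _
          have g1 := hR_norm (n+1)
          have g2 := hR_norm n
          have g3 := ha_mono n
          have g4 := ha_nonneg n
          have g5 := ha_nonneg (n+1)
          nlinarith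
        have h3 : a (n+1) * (a (n+1) - a n) + (a (n+1) - a n) * a n
            = (a (n+1))^2 - (a n)^2 := by ring
        have h4 : a (n+1+1) = (1 + a (n+1)^2)/2 := haS (n+1)
        have h5 : a (n+1) = (1 + a n ^2)/2 := haS n
        linarith [h1, h2]
  -- positivity of each approximant
  have posn : ∀ n, 0 ≤ (inner A (S ((1 - R n) ((1 - R n) x))) x : A) := by
    intro n
    set Q : H →L[ℂ] H := 1 - R n with hQdef
    have hQ_sa : ∀ x y : H, (inner A (Q x) y : A) = inner A x (Q y) := by
      intro x y
      simp only [hQdef, ContinuousLinearMap.sub_apply, ContinuousLinearMap.one_apply,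
        CStarModuleRight.inner_sub_left, CStarModuleRight.inner_sub_right, hR_sa n]
    have hQS : S (Q (Q x)) = Q (S (Q x)) := by
      simp only [hQdef, ContinuousLinearMap.sub_apply, ContinuousLinearMap.one_apply,
        map_sub, hR_comm_S n]
    rw [hQS, hQ_sa (S (Q x)) x]
    exact hS_pos (Q x)
  -- the algebraic identity
  have hQQ : ∀ n, (1 - R n) ((1 - R n) x)
      = (x - E x) + (2:ℝ) • (R (n+1) x - R n x) := by
    intro n
    have hRR : R n (R n x) = (2:ℝ) • R (n+1) x - E x := by
      have := congrArg (fun (M : H →L[ℂ] H) => M x) (hRS n)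
      simp only [ContinuousLinearMap.smul_apply, ContinuousLinearMap.add_apply,
        ContinuousLinearMap.comp_apply] at this
      rw [this]
      module
    simp only [ContinuousLinearMap.sub_apply, ContinuousLinearMap.one_apply, map_sub]
    rw [hRR]
    module
  -- pass to the limit
  set target : A := inner A (S (x - E x)) x with htargetdef
  have hsplit : ∀ n, (inner A (S ((1 - R n) ((1 - R n) x))) x : A)
      = target + (2:ℝ) • (inner A (S (R (n+1) x - R n x)) x : A) := by
    intro n
    rw [hQQ n, map_add, ContinuousLinearMap.map_smul_of_tower, CStarModuleRight.inner_add_left,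
      CStarModuleRight.inner_smul_left_real]
  have herr_bound : ∀ n, ‖(2:ℝ) • (inner A (S (R (n+1) x - R n x)) x : A)‖
      ≤ (2 * ‖S‖ * ‖x‖^2) * (a (n+1) - a n) := by
    intro n
    rw [norm_smul (2:ℝ) (inner A (S (R (n+1) x - R n x)) x : A), Real.norm_eq_abs, abs_of_nonneg (by norm_num : (0:ℝ) ≤ 2)]
    have h3 : R (n+1) x - R n x = (R (n+1) - R n) x := rfl
    have h1 : ‖(inner A (S (R (n+1) x - R n x)) x : A)‖ ≤ ‖S (R (n+1) x - R n x)‖ * ‖x‖ :=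
      CStarModuleRight.norm_inner_le H
    have h2 : ‖S (R (n+1) x - R n x)‖ ≤ ‖S‖ * (‖R (n+1) - R n‖ * ‖x‖) := by
      rw [h3]
      refine (S.le_opNorm _).trans ?_
      exact mul_le_mul_of_nonneg_left ((R (n+1) - R n).le_opNorm x) (norm_nonneg S)
    calc 2 * ‖(inner A (S (R (n+1) x - R n x)) x : A)‖
        ≤ 2 * (‖S (R (n+1) x - R n x)‖ * ‖x‖) := by
          exact mul_le_mul_of_nonneg_left h1 (by norm_num)
      _ ≤ 2 * ((‖S‖ * (‖R (n+1) - R n‖ * ‖x‖)) * ‖x‖) := by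
          have h4 := mul_le_mul_of_nonneg_right h2 (norm_nonneg x)
          exact mul_le_mul_of_nonneg_left h4 (by norm_num)
      _ = (2 * ‖S‖ * ‖x‖^2) * ‖R (n+1) - R n‖ := by ring
      _ ≤ (2 * ‖S‖ * ‖x‖^2) * (a (n+1) - a n) := by
          exact mul_le_mul_of_nonneg_left (hR_gap n) (by positivity)
  -- convergence
  have hbdd : BddAbove (Set.range a) := ⟨1, by rintro y ⟨n, rfl⟩; exact ha_le_one n⟩
  have htend : Filter.Tendsto a Filter.atTop (nhds (⨆ n, a n)) :=
    tendsto_atTop_ciSup (monotone_nat_of_le_succ ha_mono) hbdd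
  have htend' : Filter.Tendsto (fun n => a (n+1)) Filter.atTop (nhds (⨆ n, a n)) :=
    htend.comp (Filter.tendsto_add_atTop_nat 1)
  have hgap0 : Filter.Tendsto (fun n => a (n+1) - a n) Filter.atTop (nhds 0) := by
    simpa using htend'.sub htend
  have hKgap : Filter.Tendsto (fun n => (2 * ‖S‖ * ‖x‖^2) * (a (n+1) - a n))
      Filter.atTop (nhds 0) := by
    simpa using hgap0.const_mul (2 * ‖S‖ * ‖x‖^2)
  have herr0 : Filter.Tendsto (fun n => (2:ℝ) • (inner A (S (R (n+1) x - R n x)) x : A))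
      Filter.atTop (nhds 0) :=
    squeeze_zero_norm herr_bound hKgap
  have hutend : Filter.Tendsto (fun n => (inner A (S ((1 - R n) ((1 - R n) x))) x : A))
      Filter.atTop (nhds target) := by
    simp only [hsplit]
    simpa using (tendsto_const_nhds (x := target)).add herr0
  have htarget_nonneg : 0 ≤ target :=
    (CStarAlgebra.isClosed_nonneg (A := A)).mem_of_tendsto hutend
      (Filter.Eventually.of_forall posn)
  -- conclude
  have hxEx : x - E x = c⁻¹ • T x := by rw [hE_apply]; module
  have hfinal : target = c⁻¹ • (inner A (S (T x)) x : A) := by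
    rw [htargetdef, hxEx, ContinuousLinearMap.map_smul_of_tower,
      CStarModuleRight.inner_smul_left_real]
  rw [hfinal] at htarget_nonneg
  have hlast := real_smul_nonneg hc.le htarget_nonneg
  rwa [smul_smul, mul_inv_cancel₀ (ne_of_gt hc), one_smul] at hlast

-- small algebra helper for central elements
lemma central_mul_conj {u w c : A} (hu : ∀ a : A, Commute u a) :
    u * (u * (star c * (w * c))) = star c * (u * (u * w)) * c := by
  have key : ∀ z : A, u * (star c * z) = star c * (u * z) := fun z => by
    rw [← mul_assoc, (hu (star c)).eq, mul_assoc]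
  rw [key, key]
  have h1 : u * (w * c) = (u * w) * c := (mul_assoc u w c).symm
  rw [h1]
  have h2 : u * (u * w * c) = (u * (u * w)) * c := (mul_assoc u (u*w) c).symm
  rw [h2, ← mul_assoc]


/-- `Λ_{CC'}` is a `(C,C')`-controlled `K`-g-fusion frame iff there
are `A, B > 0` with `A‖K*f‖² ≤ ‖Σ_j v_j²⟨Λ_jP_{W_j}Cf, Λ_jP_{W_j}C'f⟩‖ ≤ B‖f‖²`. -/
theorem controlled_K_g_fusion_frame_iff_norm_bounds
    (C C' : H →L[ℂ] H) (P : J → H →L[ℂ] H) (Λ : ∀ j, H →L[ℂ] Hs j)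
    (Λad : ∀ j, Hs j →L[ℂ] H) (v : J → A)
    (hΛad : ∀ (j) (x : H) (u : Hs j), (inner A (Λ j x) u : A) = inner A x (Λad j u))
    (hP_idem : ∀ j, (P j).comp (P j) = P j)
    (hP_sa : ∀ (j) (f g : H), (inner A (P j f) g : A) = inner A f (P j g))
    (hC_sa : ∀ f g : H, (inner A (C f) g : A) = inner A f (C g))
    (hC'_sa : ∀ f g : H, (inner A (C' f) g : A) = inner A f (C' g))
    (hC_pos : ∀ f : H, 0 ≤ (inner A (C f) f : A))
    (hC'_pos : ∀ f : H, 0 ≤ (inner A (C' f) f : A))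
    (hC_inv : Function.Bijective C) (hC'_inv : Function.Bijective C')
    (hCC' : C.comp C' = C'.comp C)
    (hCT : ∀ j, C.comp ((P j).comp ((Λad j).comp ((Λ j).comp (P j))))
      = ((P j).comp ((Λad j).comp ((Λ j).comp (P j)))).comp C)
    (hC'T : ∀ j, C'.comp ((P j).comp ((Λad j).comp ((Λ j).comp (P j))))
      = ((P j).comp ((Λad j).comp ((Λ j).comp (P j)))).comp C')
    (hv_pos : ∀ j, 0 ≤ v j) (hv_inv : ∀ j, IsUnit (v j))
    (hv_central : ∀ (j) (a : A), Commute (v j) a)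
    (K Kad : H →L[ℂ] H)
    (hKad : ∀ x y : H, (inner A (K x) y : A) = inner A x (Kad y))
    (hsum : ∀ f : H, Summable fun j =>
      v j * v j * (inner A (Λ j (P j (C f))) (Λ j (P j (C' f))) : A)) :
    (∃ a b : ℝ, 0 < a ∧ 0 < b ∧ ∀ f : H,
      a • (inner A (Kad f) (Kad f) : A) ≤
        (∑' j, v j * v j * (inner A (Λ j (P j (C f))) (Λ j (P j (C' f))) : A)) ∧
      (∑' j, v j * v j * (inner A (Λ j (P j (C f))) (Λ j (P j (C' f))) : A)) ≤
        b • (inner A f f : A)) ↔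
    (∃ a b : ℝ, 0 < a ∧ 0 < b ∧ ∀ f : H,
      a * ‖Kad f‖ ^ 2 ≤
        ‖∑' j, v j * v j * (inner A (Λ j (P j (C f))) (Λ j (P j (C' f))) : A)‖ ∧
      ‖∑' j, v j * v j * (inner A (Λ j (P j (C f))) (Λ j (P j (C' f))) : A)‖ ≤
        b * ‖f‖ ^ 2) := by
    -- common setup ---------------------------------------------------------
  -- the "fusion" operators
  set Top : J → (H →L[ℂ] H) :=
    fun j => (P j).comp ((Λad j).comp ((Λ j).comp (P j))) with hTopdef
  have hTop_apply : ∀ j z, Top j z = P j (Λad j (Λ j (P j z))) := fun j z => rfl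
  have hΛad_symm : ∀ (j) (u : Hs j) (x : H),
      (inner A (Λad j u) x : A) = inner A u (Λ j x) := fun j u x =>
    adj_symm (Λ j) (Λad j) (hΛad j) u x
  have hTop_inner : ∀ (j) (x y : H),
      (inner A (Top j x) y : A) = inner A (Λ j (P j x)) (Λ j (P j y)) := by
    intro j x y
    rw [hTop_apply, hP_sa j, hΛad_symm j]
  have hTop_sa : ∀ (j) (x y : H), (inner A (Top j x) y : A) = inner A x (Top j y) := by
    intro j x y
    rw [hTop_inner j x y, ← CStarModuleRight.star_inner, ← hTop_inner j y x,
      CStarModuleRight.star_inner]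
  have hTop_pos : ∀ (j) (x : H), 0 ≤ (inner A (Top j x) x : A) := by
    intro j x
    rw [hTop_inner j x x]
    exact CStarModuleRight.inner_self_nonneg
  -- commutation, pointwise
  have hCC'p : ∀ z, C (C' z) = C' (C z) := fun z => by
    have := ContinuousLinearMap.ext_iff.mp hCC' z
    simpa using this
  have hCTp : ∀ j z, C (Top j z) = Top j (C z) := fun j z => by
    have := ContinuousLinearMap.ext_iff.mp (hCT j) z
    simpa [hTop_apply] using this
  have hC'Tp : ∀ j z, C' (Top j z) = Top j (C' z) := fun j z => by
    have := ContinuousLinearMap.ext_iff.mp (hC'T j) z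
    simpa [hTop_apply] using this
  -- the product operator CC' is positive
  have hD_pos : ∀ z, 0 ≤ (inner A (C (C' z)) z : A) :=
    inner_comp_self_nonneg C C' hC_sa hC'_sa hC_pos hC'_pos hCC'p
  have hD_sa : ∀ x y : H, (inner A (C (C' x)) y : A) = inner A x (C (C' y)) := by
    intro x y
    rw [hC_sa, hC'_sa, hCC'p]
  -- Top j ∘ CC' is positive
  have hTD_pos : ∀ j x, 0 ≤ (inner A (Top j (C (C' x))) x : A) := by
    intro j x
    have h := inner_comp_self_nonneg (Top j) (C.comp C')
      (hTop_sa j)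
      (fun x y => by simpa using hD_sa x y)
      (hTop_pos j)
      (fun x => by simpa using hD_pos x)
      (fun z => by
        simp only [ContinuousLinearMap.comp_apply]
        rw [← hCTp j, ← hC'Tp j]) x
    simpa using h
  -- the terms of the sum
  have hw_eq : ∀ (j) (f : H), (inner A (Λ j (P j (C f))) (Λ j (P j (C' f))) : A)
      = inner A f (Top j (C (C' f))) := by
    intro j f
    rw [hΛad j (P j (C f)), hP_sa j (C f), hC_sa]
    congr 1
    rw [← hTop_apply, hCTp j]
  have hw_nonneg : ∀ (j) (f : H),
      0 ≤ (inner A (Λ j (P j (C f))) (Λ j (P j (C' f))) : A) := by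
    intro j f
    rw [hw_eq j f, ← CStarModuleRight.star_inner,
      (IsSelfAdjoint.of_nonneg (hTD_pos j f)).star_eq]
    exact hTD_pos j f
  have hterm_nonneg : ∀ (j) (f : H),
      0 ≤ v j * v j * (inner A (Λ j (P j (C f))) (Λ j (P j (C' f))) : A) := by
    intro j f
    have hsv : star (v j) = v j := (IsSelfAdjoint.of_nonneg (hv_pos j)).star_eq
    have hzz := star_left_conjugate_nonneg (hw_nonneg j f) (v j)
    have heq : v j * v j * (inner A (Λ j (P j (C f))) (Λ j (P j (C' f))) : A)
        = star (v j) * (inner A (Λ j (P j (C f))) (Λ j (P j (C' f))) : A) * v j := by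
      rw [hsv, mul_assoc,
        (hv_central j (inner A (Λ j (P j (C f))) (Λ j (P j (C' f))) : A)).eq, ← mul_assoc,
        (hv_central j (inner A (Λ j (P j (C f))) (Λ j (P j (C' f))) : A)).eq]
    rw [heq]
    exact hzz
  have hS_nonneg : ∀ f : H,
      0 ≤ ∑' j, v j * v j * (inner A (Λ j (P j (C f))) (Λ j (P j (C' f))) : A) :=
    fun f => tsum_nonneg (fun j => hterm_nonneg j f)
  -- A-linearity of the operators
  have hC_A : ∀ (a : A) (z : H), C (z <• a) = (C z) <• a := map_op_smul' C C hC_sa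
  have hC'_A : ∀ (a : A) (z : H), C' (z <• a) = (C' z) <• a := map_op_smul' C' C' hC'_sa
  have hP_A : ∀ (j) (a : A) (z : H), P j (z <• a) = (P j z) <• a :=
    fun j => map_op_smul' (P j) (P j) (hP_sa j)
  have hΛ_A : ∀ (j) (a : A) (z : H), Λ j (z <• a) = (Λ j z) <• a :=
    fun j => map_op_smul' (Λ j) (Λad j) (hΛad j)
  have hKad_A : ∀ (a : A) (z : H), Kad (z <• a) = (Kad z) <• a := by
    refine map_op_smul' Kad K (fun x u => ?_)
    rw [← CStarModuleRight.star_inner, ← hKad u x, CStarModuleRight.star_inner]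
  -- conjugation identity for the sum
  have hconj : ∀ (f : H) (c : A),
      (∑' j, v j * v j *
        (inner A (Λ j (P j (C (f <• c)))) (Λ j (P j (C' (f <• c)))) : A))
      = star c *
        (∑' j, v j * v j * (inner A (Λ j (P j (C f))) (Λ j (P j (C' f))) : A)) * c := by
    intro f c
    set Φ : A →L[ℂ] A :=
      (ContinuousLinearMap.mul ℂ A (star c)).comp
        ((ContinuousLinearMap.mul ℂ A).flip c) with hΦdef
    have hΦ_apply : ∀ z : A, Φ z = star c * (z * c) := fun z => rfl
    have hterm : ∀ j, v j * v j *
        (inner A (Λ j (P j (C (f <• c)))) (Λ j (P j (C' (f <• c)))) : A)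
        = Φ (v j * v j * (inner A (Λ j (P j (C f))) (Λ j (P j (C' f))) : A)) := by
      intro j
      rw [hΦ_apply, hC_A, hC'_A, hP_A, hP_A, hΛ_A, hΛ_A,
        CStarModuleRight.inner_op_smul_left, CStarModuleRight.inner_op_smul_right]
      rw [mul_assoc (v j) (v j)]
      rw [central_mul_conj (hv_central j)]
      rw [mul_assoc (star c), mul_assoc (v j) (v j)]
    rw [tsum_congr hterm, ← Φ.map_tsum (hsum f), hΦ_apply, ← mul_assoc]
  -- conjugation identity for ⟪f, f⟫ and ⟪Kad f, Kad f⟫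
  have hinner_conj : ∀ (f : H) (c : A),
      (inner A (f <• c) (f <• c) : A) = star c * (inner A f f : A) * c := by
    intro f c
    rw [CStarModuleRight.inner_op_smul_left, CStarModuleRight.inner_op_smul_right, mul_assoc]
  have hKad_conj : ∀ (f : H) (c : A),
      (inner A (Kad (f <• c)) (Kad (f <• c)) : A)
        = star c * (inner A (Kad f) (Kad f) : A) * c := by
    intro f c
    rw [hKad_A, CStarModuleRight.inner_op_smul_left, CStarModuleRight.inner_op_smul_right, mul_assoc]
  -- norm facts
  have hnorm_smul : ∀ (r : ℝ) (hr : 0 ≤ r) (z : A), ‖r • z‖ = r * ‖z‖ := by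
    intro r hr z
    rw [norm_smul r z, Real.norm_eq_abs, abs_of_nonneg hr]
  have hsmul_conj : ∀ (r : ℝ) (z c : A),
      star c * (r • z) * c = r • (star c * z * c) := by
    intro r z c
    rw [mul_smul_comm, smul_mul_assoc]
  -- main proof -------------------------------------------------------------
  constructor
  · rintro ⟨a, b, ha, hb, hf⟩
    refine ⟨a, b, ha, hb, fun f => ?_⟩
    obtain ⟨h1, h2⟩ := hf f
    have hK0 : 0 ≤ (inner A (Kad f) (Kad f) : A) := CStarModuleRight.inner_self_nonneg
    have haK : 0 ≤ a • (inner A (Kad f) (Kad f) : A) := real_smul_nonneg ha.le hK0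
    constructor
    · have hle := CStarAlgebra.norm_le_norm_of_nonneg_of_le haK h1
      rw [hnorm_smul a ha.le, ← CStarModuleRight.norm_sq_eq (A := A)] at hle
      exact hle
    · have hle := CStarAlgebra.norm_le_norm_of_nonneg_of_le (hS_nonneg f) h2
      rw [hnorm_smul b hb.le, ← CStarModuleRight.norm_sq_eq (A := A)] at hle
      exact hle
  · rintro ⟨a, b, ha, hb, hf⟩
    refine ⟨a, b, ha, hb, fun f => ?_⟩
    constructor
    · -- lower bound
      apply le_of_forall_conj_norm_le
        (real_smul_nonneg ha.le CStarModuleRight.inner_self_nonneg) (hS_nonneg f)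
      intro c
      have hL : ‖star c * (a • (inner A (Kad f) (Kad f) : A)) * c‖
          = a * ‖(inner A (Kad (f <• c)) (Kad (f <• c)) : A)‖ := by
        rw [hsmul_conj, hnorm_smul a ha.le, hKad_conj]
      have hR : ‖star c *
          (∑' j, v j * v j * (inner A (Λ j (P j (C f))) (Λ j (P j (C' f))) : A)) * c‖
          = ‖∑' j, v j * v j *
            (inner A (Λ j (P j (C (f <• c)))) (Λ j (P j (C' (f <• c)))) : A)‖ := by
        rw [hconj]
      rw [hL, hR, ← CStarModuleRight.norm_sq_eq (A := A)]
      exact (hf (f <• c)).1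
    · -- upper bound
      apply le_of_forall_conj_norm_le (hS_nonneg f)
        (real_smul_nonneg hb.le CStarModuleRight.inner_self_nonneg)
      intro c
      have hL : ‖star c *
          (∑' j, v j * v j * (inner A (Λ j (P j (C f))) (Λ j (P j (C' f))) : A)) * c‖
          = ‖∑' j, v j * v j *
            (inner A (Λ j (P j (C (f <• c)))) (Λ j (P j (C' (f <• c)))) : A)‖ := by
        rw [hconj]
      have hR : ‖star c * (b • (inner A f f : A)) * c‖
          = b * ‖(inner A (f <• c) (f <• c) : A)‖ := by
        rw [hsmul_conj, hnorm_smul b hb.le, hinner_conj]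
      rw [hL, hR, ← CStarModuleRight.norm_sq_eq (A := A)]
      exact (hf (f <• c)).2
end
end
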